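/- Let F̂ be the transfer operator of the Farey map, given by (F̂f)(x) = (f(x/(1+x)) + x·f(1/(1+x)))/(1+x). If f ∈ C²(0,1) satisfies f' > 0 and f'' ≤ 0, then F̂f ∈ C²(0,1) also satisfies (F̂f)' > 0 and (F̂f)'' ≤ 0. -/

import Mathlib

open Set

noncomputable def fareyHat (f : ℝ → ℝ) (x : ℝ) : ℝ :=
  (f (x / (1 + x)) + x * f (1 / (1 + x))) / (1 + x)

/-- First derivative of `fareyHat f`, in clean form. -/
noncomputable def fareyG (f : ℝ → ℝ) (x : ℝ) : ℝ :=
  (deriv f (x / (1 + x)) - x * deriv f (1 / (1 + x))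
    + (1 + x) * (f (1 / (1 + x)) - f (x / (1 + x)))) / (1 + x) ^ 3

/-- Second derivative of `fareyHat f`, in clean form. -/
noncomputable def fareyH (f : ℝ → ℝ) (x : ℝ) : ℝ :=
  (deriv (deriv f) (x / (1 + x)) + x * deriv (deriv f) (1 / (1 + x))) / (1 + x) ^ 5
    + (2 * (x - 1) * deriv f (1 / (1 + x)) - 4 * deriv f (x / (1 + x))) / (1 + x) ^ 4
    - 2 * (f (1 / (1 + x)) - f (x / (1 + x))) / (1 + x) ^ 3

lemma mem_u {x : ℝ} (hx : x ∈ Ioo (0:ℝ) 1) : x / (1 + x) ∈ Ioo (0:ℝ) 1 := by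
  obtain ⟨hx0, hx1⟩ := hx
  constructor
  · positivity
  · rw [div_lt_one (by linarith)]; linarith

lemma mem_v {x : ℝ} (hx : x ∈ Ioo (0:ℝ) 1) : 1 / (1 + x) ∈ Ioo (0:ℝ) 1 := by
  obtain ⟨hx0, hx1⟩ := hx
  constructor
  · positivity
  · rw [div_lt_one (by linarith)]; linarith

lemma hasDerivAt_fareyHat (f : ℝ → ℝ) (hdf : DifferentiableOn ℝ f (Ioo (0:ℝ) 1))
    {x : ℝ} (hx : x ∈ Ioo (0:ℝ) 1) : HasDerivAt (fareyHat f) (fareyG f x) x := by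
  obtain ⟨hx0, hx1⟩ := hx
  have hD : (0:ℝ) < 1 + x := by linarith
  have hDne : (1:ℝ) + x ≠ 0 := ne_of_gt hD
  have hden : HasDerivAt (fun y : ℝ => 1 + y) 1 x := by
    simpa using (hasDerivAt_id x).const_add (1:ℝ)
  have h1 : HasDerivAt (fun y : ℝ => y / (1 + y)) ((1 * (1 + x) - x * 1) / (1 + x) ^ 2) x :=
    (hasDerivAt_id x).div hden hDne
  have h2 : HasDerivAt (fun y : ℝ => 1 / (1 + y)) ((0 * (1 + x) - 1 * 1) / (1 + x) ^ 2) x :=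
    (hasDerivAt_const x 1).div hden hDne
  have hfu : HasDerivAt f (deriv f (x / (1 + x))) (x / (1 + x)) :=
    (hdf.differentiableAt (isOpen_Ioo.mem_nhds (mem_u ⟨hx0, hx1⟩))).hasDerivAt
  have hfv : HasDerivAt f (deriv f (1 / (1 + x))) (1 / (1 + x)) :=
    (hdf.differentiableAt (isOpen_Ioo.mem_nhds (mem_v ⟨hx0, hx1⟩))).hasDerivAt
  have hcu : HasDerivAt (fun y : ℝ => f (y / (1 + y)))
      (deriv f (x / (1 + x)) * ((1 * (1 + x) - x * 1) / (1 + x) ^ 2)) x := hfu.comp x h1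
  have hcv : HasDerivAt (fun y : ℝ => f (1 / (1 + y)))
      (deriv f (1 / (1 + x)) * ((0 * (1 + x) - 1 * 1) / (1 + x) ^ 2)) x := hfv.comp x h2
  have hnum : HasDerivAt (fun y : ℝ => f (y / (1 + y)) + y * f (1 / (1 + y)))
      (deriv f (x / (1 + x)) * ((1 * (1 + x) - x * 1) / (1 + x) ^ 2)
        + (1 * f (1 / (1 + x))
          + x * (deriv f (1 / (1 + x)) * ((0 * (1 + x) - 1 * 1) / (1 + x) ^ 2)))) x :=
    hcu.add ((hasDerivAt_id x).mul hcv)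
  have hfun : HasDerivAt (fareyHat f)
      (((deriv f (x / (1 + x)) * ((1 * (1 + x) - x * 1) / (1 + x) ^ 2)
        + (1 * f (1 / (1 + x))
          + x * (deriv f (1 / (1 + x)) * ((0 * (1 + x) - 1 * 1) / (1 + x) ^ 2)))) * (1 + x)
        - (f (x / (1 + x)) + x * f (1 / (1 + x))) * 1) / (1 + x) ^ 2) x :=
    hnum.div hden hDne
  convert hfun using 1
  unfold fareyG
  field_simp
  ring

lemma hasDerivAt_fareyG (f : ℝ → ℝ) (hdf : DifferentiableOn ℝ f (Ioo (0:ℝ) 1))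
    (hdf' : DifferentiableOn ℝ (deriv f) (Ioo (0:ℝ) 1))
    {x : ℝ} (hx : x ∈ Ioo (0:ℝ) 1) : HasDerivAt (fareyG f) (fareyH f x) x := by
  obtain ⟨hx0, hx1⟩ := hx
  have hD : (0:ℝ) < 1 + x := by linarith
  have hDne : (1:ℝ) + x ≠ 0 := ne_of_gt hD
  have hD3ne : ((1:ℝ) + x) ^ 3 ≠ 0 := pow_ne_zero _ hDne
  have hden : HasDerivAt (fun y : ℝ => 1 + y) 1 x := by
    simpa using (hasDerivAt_id x).const_add (1:ℝ)
  have h1 : HasDerivAt (fun y : ℝ => y / (1 + y)) ((1 * (1 + x) - x * 1) / (1 + x) ^ 2) x :=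
    (hasDerivAt_id x).div hden hDne
  have h2 : HasDerivAt (fun y : ℝ => 1 / (1 + y)) ((0 * (1 + x) - 1 * 1) / (1 + x) ^ 2) x :=
    (hasDerivAt_const x 1).div hden hDne
  have hfu : HasDerivAt f (deriv f (x / (1 + x))) (x / (1 + x)) :=
    (hdf.differentiableAt (isOpen_Ioo.mem_nhds (mem_u ⟨hx0, hx1⟩))).hasDerivAt
  have hfv : HasDerivAt f (deriv f (1 / (1 + x))) (1 / (1 + x)) :=
    (hdf.differentiableAt (isOpen_Ioo.mem_nhds (mem_v ⟨hx0, hx1⟩))).hasDerivAt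
  have hgu : HasDerivAt (deriv f) (deriv (deriv f) (x / (1 + x))) (x / (1 + x)) :=
    (hdf'.differentiableAt (isOpen_Ioo.mem_nhds (mem_u ⟨hx0, hx1⟩))).hasDerivAt
  have hgv : HasDerivAt (deriv f) (deriv (deriv f) (1 / (1 + x))) (1 / (1 + x)) :=
    (hdf'.differentiableAt (isOpen_Ioo.mem_nhds (mem_v ⟨hx0, hx1⟩))).hasDerivAt
  have hcu : HasDerivAt (fun y : ℝ => f (y / (1 + y)))
      (deriv f (x / (1 + x)) * ((1 * (1 + x) - x * 1) / (1 + x) ^ 2)) x := hfu.comp x h1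
  have hcv : HasDerivAt (fun y : ℝ => f (1 / (1 + y)))
      (deriv f (1 / (1 + x)) * ((0 * (1 + x) - 1 * 1) / (1 + x) ^ 2)) x := hfv.comp x h2
  have hcu' : HasDerivAt (fun y : ℝ => deriv f (y / (1 + y)))
      (deriv (deriv f) (x / (1 + x)) * ((1 * (1 + x) - x * 1) / (1 + x) ^ 2)) x := by have := hgu.comp x h1; exact this
  have hcv' : HasDerivAt (fun y : ℝ => deriv f (1 / (1 + y)))
      (deriv (deriv f) (1 / (1 + x)) * ((0 * (1 + x) - 1 * 1) / (1 + x) ^ 2)) x := by have := hgv.comp x h2; exact this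
  have hnum : HasDerivAt (fun y : ℝ => deriv f (y / (1 + y)) - y * deriv f (1 / (1 + y))
      + (1 + y) * (f (1 / (1 + y)) - f (y / (1 + y))))
      ((deriv (deriv f) (x / (1 + x)) * ((1 * (1 + x) - x * 1) / (1 + x) ^ 2)
        - (1 * deriv f (1 / (1 + x))
          + x * (deriv (deriv f) (1 / (1 + x)) * ((0 * (1 + x) - 1 * 1) / (1 + x) ^ 2))))
        + (1 * (f (1 / (1 + x)) - f (x / (1 + x)))
          + (1 + x) * (deriv f (1 / (1 + x)) * ((0 * (1 + x) - 1 * 1) / (1 + x) ^ 2)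
            - deriv f (x / (1 + x)) * ((1 * (1 + x) - x * 1) / (1 + x) ^ 2)))) x :=
    (hcu'.sub ((hasDerivAt_id x).mul hcv')).add (hden.mul (hcv.sub hcu))
  have hdenpow : HasDerivAt (fun y : ℝ => (1 + y) ^ 3) ((3:ℕ) * (1 + x) ^ (3 - 1) * 1) x :=
    hden.pow 3
  have hfun := hnum.div hdenpow hD3ne
  convert hfun using 1
  any_goals rfl
  unfold fareyH
  field_simp
  ring

theorem fareyHat_preserves_cone (f : ℝ → ℝ)
    (hf : ContDiffOn ℝ 2 f (Set.Ioo (0:ℝ) 1))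
    (hf' : ∀ x ∈ Set.Ioo (0:ℝ) 1, 0 < deriv f x)
    (hf'' : ∀ x ∈ Set.Ioo (0:ℝ) 1, deriv (deriv f) x ≤ 0) :
    ContDiffOn ℝ 2 (fareyHat f) (Set.Ioo (0:ℝ) 1) ∧
    (∀ x ∈ Set.Ioo (0:ℝ) 1, 0 < deriv (fareyHat f) x) ∧
    (∀ x ∈ Set.Ioo (0:ℝ) 1, deriv (deriv (fareyHat f)) x ≤ 0) := by
  have hS : IsOpen (Ioo (0:ℝ) 1) := isOpen_Ioo
  have hfd1 : ContDiffOn ℝ 1 (deriv f) (Ioo (0:ℝ) 1) :=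
    hf.deriv_of_isOpen hS (by norm_num)
  have hdf : DifferentiableOn ℝ f (Ioo (0:ℝ) 1) := hf.differentiableOn (by norm_num)
  have hdf' : DifferentiableOn ℝ (deriv f) (Ioo (0:ℝ) 1) := hfd1.differentiableOn (by norm_num)
  have hmono : StrictMonoOn f (Ioo (0:ℝ) 1) :=
    strictMonoOn_of_deriv_pos (convex_Ioo 0 1) hf.continuousOn (by rwa [interior_Ioo])
  have hanti : AntitoneOn (deriv f) (Ioo (0:ℝ) 1) :=
    antitoneOn_of_deriv_nonpos (convex_Ioo 0 1) hfd1.continuousOn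
      (by rw [interior_Ioo]; exact hdf') (by rwa [interior_Ioo])
  -- the ContDiffOn part
  have hne : ∀ y ∈ Ioo (0:ℝ) 1, (1:ℝ) + y ≠ 0 := fun y hy => by
    have := hy.1; intro h; linarith
  have hc1 : ContDiffOn ℝ 2 (fun y : ℝ => y / (1 + y)) (Ioo (0:ℝ) 1) :=
    contDiffOn_id.div (contDiffOn_const.add contDiffOn_id) hne
  have hc2 : ContDiffOn ℝ 2 (fun y : ℝ => 1 / (1 + y)) (Ioo (0:ℝ) 1) :=
    contDiffOn_const.div (contDiffOn_const.add contDiffOn_id) hne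
  have hsmooth : ContDiffOn ℝ 2 (fareyHat f) (Set.Ioo (0:ℝ) 1) := by
    have : ContDiffOn ℝ 2
        (fun y : ℝ => (f (y / (1 + y)) + y * f (1 / (1 + y))) / (1 + y)) (Ioo (0:ℝ) 1) :=
      ((hf.comp hc1 (fun y hy => mem_u hy)).add
        (contDiffOn_id.mul (hf.comp hc2 (fun y hy => mem_v hy)))).div
        (contDiffOn_const.add contDiffOn_id) hne
    exact this
  refine ⟨hsmooth, ?_, ?_⟩
  · -- first derivative positive
    intro x hx
    rw [(hasDerivAt_fareyHat f hdf hx).deriv]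
    obtain ⟨hx0, hx1⟩ := hx
    have hD : (0:ℝ) < 1 + x := by linarith
    have hmu' := mem_u (⟨hx0, hx1⟩ : x ∈ Ioo (0:ℝ) 1)
    have hmv' := mem_v (⟨hx0, hx1⟩ : x ∈ Ioo (0:ℝ) 1)
    have huv : x / (1 + x) < 1 / (1 + x) := by
      rw [div_lt_div_iff₀ hD hD]; nlinarith
    have h1 : deriv f (1 / (1 + x)) ≤ deriv f (x / (1 + x)) := hanti hmu' hmv' huv.le
    have h2 : f (x / (1 + x)) ≤ f (1 / (1 + x)) := (hmono hmu' hmv' huv).le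
    have h3 : 0 < deriv f (1 / (1 + x)) := hf' _ hmv'
    unfold fareyG
    apply div_pos _ (by positivity)
    nlinarith [mul_nonneg hD.le (sub_nonneg.mpr h2)]
  · -- second derivative nonpositive
    intro x hx
    have hEqev : deriv (fareyHat f) =ᶠ[nhds x] fareyG f :=
      Filter.eventuallyEq_of_mem (hS.mem_nhds hx)
        (fun y hy => (hasDerivAt_fareyHat f hdf hy).deriv)
    rw [hEqev.deriv_eq, (hasDerivAt_fareyG f hdf hdf' hx).deriv]
    obtain ⟨hx0, hx1⟩ := hx
    have hD : (0:ℝ) < 1 + x := by linarith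
    have hmu' := mem_u (⟨hx0, hx1⟩ : x ∈ Ioo (0:ℝ) 1)
    have hmv' := mem_v (⟨hx0, hx1⟩ : x ∈ Ioo (0:ℝ) 1)
    have huv : x / (1 + x) < 1 / (1 + x) := by
      rw [div_lt_div_iff₀ hD hD]; nlinarith
    have h2 : f (x / (1 + x)) ≤ f (1 / (1 + x)) := (hmono hmu' hmv' huv).le
    have h3 : 0 < deriv f (1 / (1 + x)) := hf' _ hmv'
    have h4 : 0 < deriv f (x / (1 + x)) := hf' _ hmu'
    have h5 : deriv (deriv f) (x / (1 + x)) ≤ 0 := hf'' _ hmu'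
    have h6 : deriv (deriv f) (1 / (1 + x)) ≤ 0 := hf'' _ hmv'
    unfold fareyH
    have t1 : (deriv (deriv f) (x / (1 + x)) + x * deriv (deriv f) (1 / (1 + x)))
        / (1 + x) ^ 5 ≤ 0 := by
      apply div_nonpos_of_nonpos_of_nonneg _ (by positivity)
      nlinarith
    have t2 : (2 * (x - 1) * deriv f (1 / (1 + x)) - 4 * deriv f (x / (1 + x)))
        / (1 + x) ^ 4 ≤ 0 := by
      apply div_nonpos_of_nonpos_of_nonneg _ (by positivity)
      nlinarith
    have t3 : 0 ≤ 2 * (f (1 / (1 + x)) - f (x / (1 + x))) / (1 + x) ^ 3 := by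
      apply div_nonneg _ (by positivity)
      linarith
    linarith
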